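/- Weighted elliptical potential lemma: let {x_s}_{s=1}^{T} be a sequence in ℝ^d with ‖x_s‖₂ ≤ L for all s, let λ > 0 and γ ∈ (0,1), and for t ≥ 1 define V_t = Σ_{s=1}^{t-1} γ^{t-1-s} x_s x_sᵀ + λ I_d. Then Σ_{t=1}^{T} ‖x_t‖²_{V_t^{-1}} ≤ 2 max(1, L²/λ) · ( d T log(1/γ) + log( det(V_{T+1}) / λ^d ) ). -/

import Mathlib

open Finset Matrix

noncomputable section

/-- Euclidean norm of a vector in `ℝ^d`. -/
def enorm {d : ℕ} (v : Fin d → ℝ) : ℝ := Real.sqrt (v ⬝ᵥ v)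

/-- Norm ‖v‖_M = √(vᵀ M v) associated with a (positive definite) matrix M. -/
def mnorm {d : ℕ} (M : Matrix (Fin d) (Fin d) ℝ) (v : Fin d → ℝ) : ℝ :=
  Real.sqrt (v ⬝ᵥ M.mulVec v)

/-- The quasi-likelihood map g_t(θ) = Σ_{s=1}^{t-1} γ^{t-1-s} μ(⟨x_s,θ⟩) x_s + λ c_μ θ. -/
def gmap {d : ℕ} (t : ℕ) (γ lam cmu : ℝ) (μ : ℝ → ℝ) (x : ℕ → Fin d → ℝ)
    (θ : Fin d → ℝ) : Fin d → ℝ :=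
  (∑ s ∈ Finset.Icc 1 (t - 1), (γ ^ (t - 1 - s) * μ (x s ⬝ᵥ θ)) • x s) + (lam * cmu) • θ

/-- Weighted design matrix V_t = Σ_{s=1}^{t-1} γ^{t-1-s} x_s x_sᵀ + λ I_d. -/
def designV {d : ℕ} (t : ℕ) (γ lam : ℝ) (x : ℕ → Fin d → ℝ) : Matrix (Fin d) (Fin d) ℝ :=
  (∑ s ∈ Finset.Icc 1 (t - 1), (γ ^ (t - 1 - s)) • vecMulVec (x s) (x s))
    + lam • (1 : Matrix (Fin d) (Fin d) ℝ)

/-- Weighted design matrix Ṽ_t = Σ_{s=1}^{t-1} γ^{2(t-1-s)} x_s x_sᵀ + λ I_d. -/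
def designVtilde {d : ℕ} (t : ℕ) (γ lam : ℝ) (x : ℕ → Fin d → ℝ) : Matrix (Fin d) (Fin d) ℝ :=
  (∑ s ∈ Finset.Icc 1 (t - 1), (γ ^ (2 * (t - 1 - s))) • vecMulVec (x s) (x s))
    + lam • (1 : Matrix (Fin d) (Fin d) ℝ)

/-! ### Auxiliary lemmas -/

lemma psd_vecMulVec {d : ℕ} (v : Fin d → ℝ) : (vecMulVec v v).PosSemidef := by
  have h : vecMulVec v v = (replicateRow Unit v)ᴴ * (replicateRow Unit v) := by
    rw [conjTranspose_replicateRow, star_trivial, ← vecMulVec_eq]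
  rw [h]; exact posSemidef_conjTranspose_mul_self _

lemma psd_smul {d : ℕ} {A : Matrix (Fin d) (Fin d) ℝ} (hA : A.PosSemidef) {c : ℝ}
    (hc : 0 ≤ c) : (c • A).PosSemidef := by
  refine .of_dotProduct_mulVec_nonneg ?_ fun y => ?_
  · unfold Matrix.IsHermitian
    rw [conjTranspose_smul, hA.1.eq, star_trivial]
  · rw [smul_mulVec, dotProduct_smul, smul_eq_mul]
    exact mul_nonneg hc (hA.dotProduct_mulVec_nonneg y)

lemma pd_smul_one {d : ℕ} {c : ℝ} (hc : 0 < c) :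
    (c • (1 : Matrix (Fin d) (Fin d) ℝ)).PosDef := by
  rw [smul_one_eq_diagonal]
  exact Matrix.PosDef.diagonal fun _ => hc

lemma pd_smul {d : ℕ} {A : Matrix (Fin d) (Fin d) ℝ} (hA : A.PosDef) {c : ℝ}
    (hc : 0 < c) : (c • A).PosDef := by
  refine .of_dotProduct_mulVec_pos ?_ fun y hy => ?_
  · unfold Matrix.IsHermitian
    rw [conjTranspose_smul, hA.1.eq, star_trivial]
  · rw [smul_mulVec, dotProduct_smul, smul_eq_mul]
    exact mul_pos hc (hA.dotProduct_mulVec_pos hy)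

lemma psd_sum {d : ℕ} {ι : Type*} (s : Finset ι) (f : ι → Matrix (Fin d) (Fin d) ℝ)
    (h : ∀ i ∈ s, (f i).PosSemidef) : (∑ i ∈ s, f i).PosSemidef := by
  classical
  induction s using Finset.induction_on with
  | empty => simpa using Matrix.PosSemidef.zero
  | insert _ _ hni ih =>
    rw [Finset.sum_insert hni]
    exact (h _ (Finset.mem_insert_self _ _)).add
      (ih fun i hi => h i (Finset.mem_insert_of_mem hi))

lemma designS_psd {d : ℕ} (t : ℕ) {γ : ℝ} (hγ : 0 < γ) (x : ℕ → Fin d → ℝ) :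
    (∑ s ∈ Finset.Icc 1 (t - 1), (γ ^ (t - 1 - s)) • vecMulVec (x s) (x s)).PosSemidef :=
  psd_sum _ _ fun s _ => psd_smul (psd_vecMulVec (x s)) (pow_nonneg hγ.le _)

lemma designV_pd {d : ℕ} (t : ℕ) {γ lam : ℝ} (hγ : 0 < γ) (hlam : 0 < lam)
    (x : ℕ → Fin d → ℝ) : (designV t γ lam x).PosDef :=
  Matrix.PosDef.posSemidef_add (designS_psd t hγ x) (pd_smul_one hlam)

lemma designV_lower {d : ℕ} (t : ℕ) {γ lam : ℝ} (hγ : 0 < γ) (x : ℕ → Fin d → ℝ)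
    (y : Fin d → ℝ) : lam * (y ⬝ᵥ y) ≤ y ⬝ᵥ (designV t γ lam x) *ᵥ y := by
  have h := (designS_psd t hγ x).dotProduct_mulVec_nonneg y
  rw [star_trivial] at h
  unfold designV
  rw [add_mulVec, dotProduct_add, smul_mulVec, one_mulVec, dotProduct_smul, smul_eq_mul]
  linarith

lemma dotProduct_self_nn {d : ℕ} (v : Fin d → ℝ) : 0 ≤ v ⬝ᵥ v :=
  Finset.sum_nonneg fun _ _ => mul_self_nonneg _

lemma quad_inv_le {d : ℕ} {V : Matrix (Fin d) (Fin d) ℝ} (hV : V.PosDef) {lam : ℝ}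
    (hlam : 0 < lam) (hlow : ∀ y, lam * (y ⬝ᵥ y) ≤ y ⬝ᵥ V *ᵥ y) (v : Fin d → ℝ) :
    v ⬝ᵥ V⁻¹ *ᵥ v ≤ (v ⬝ᵥ v) / lam := by
  set y : Fin d → ℝ := V⁻¹ *ᵥ v with hy
  have hVy : V *ᵥ y = v := by
    rw [hy, mulVec_mulVec, Matrix.mul_nonsing_inv _ hV.det_pos.ne'.isUnit, one_mulVec]
  have hw0 : 0 ≤ v ⬝ᵥ V⁻¹ *ᵥ v := by
    have := hV.inv.posSemidef.dotProduct_mulVec_nonneg v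
    rwa [star_trivial] at this
  set w : ℝ := v ⬝ᵥ V⁻¹ *ᵥ v with hwdef
  have hquad : y ⬝ᵥ V *ᵥ y = w := by rw [hVy, dotProduct_comm]
  have hlow' : lam * (y ⬝ᵥ y) ≤ w := hquad ▸ hlow y
  have hcs : w ^ 2 ≤ (v ⬝ᵥ v) * (y ⬝ᵥ y) := by
    rw [hwdef]
    simpa [dotProduct, pow_two, hy] using
      Finset.sum_mul_sq_le_sq_mul_sq Finset.univ v y
  have hvv : 0 ≤ v ⬝ᵥ v := dotProduct_self_nn v
  have hyy : 0 ≤ y ⬝ᵥ y := dotProduct_self_nn y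
  have key : lam * w ^ 2 ≤ (v ⬝ᵥ v) * w := by
    calc lam * w ^ 2 ≤ lam * ((v ⬝ᵥ v) * (y ⬝ᵥ y)) := by
          exact mul_le_mul_of_nonneg_left hcs hlam.le
      _ = (v ⬝ᵥ v) * (lam * (y ⬝ᵥ y)) := by ring
      _ ≤ (v ⬝ᵥ v) * w := mul_le_mul_of_nonneg_left hlow' hvv
  rw [le_div_iff₀ hlam]
  rcases hw0.eq_or_lt with h | h
  · rw [← h]; simpa using hvv
  · nlinarith [key, h]

lemma det_le_det_add_smul_one {d : ℕ} {S : Matrix (Fin d) (Fin d) ℝ} (hS : S.PosSemidef)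
    {c : ℝ} (hc : 0 ≤ c) : S.det ≤ (S + c • 1).det := by
  classical
  set U : Matrix (Fin d) (Fin d) ℝ :=
    (Matrix.IsHermitian.eigenvectorUnitary hS.1 : Matrix (Fin d) (Fin d) ℝ) with hUdef
  have hU : U * star U = 1 :=
    (Matrix.mem_unitaryGroup_iff).mp (Matrix.IsHermitian.eigenvectorUnitary hS.1).2
  have hspec : S = U * diagonal (RCLike.ofReal ∘ hS.1.eigenvalues) * star U :=
    hS.1.spectral_theorem
  have hofReal : (RCLike.ofReal ∘ hS.1.eigenvalues : Fin d → ℝ) = hS.1.eigenvalues := by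
    funext i; simp [RCLike.ofReal]
  have h1 : (c : ℝ) • (1 : Matrix (Fin d) (Fin d) ℝ) = U * (c • 1) * star U := by
    rw [Matrix.mul_smul, Matrix.mul_one, Matrix.smul_mul, hU]
  have hdetU : U.det * (star U).det = 1 := by rw [← det_mul, hU, det_one]
  have hsum : S + c • 1 = U * (diagonal (hS.1.eigenvalues + fun _ => c)) * star U := by
    conv_lhs => rw [hspec, h1]
    rw [← Matrix.add_mul, ← Matrix.mul_add, hofReal, smul_one_eq_diagonal, diagonal_add]
    rfl
  have hdS : S.det = ∏ i, hS.1.eigenvalues i := by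
    conv_lhs => rw [hspec]
    rw [det_mul, det_mul, mul_comm, ← mul_assoc, mul_comm (star U).det, hdetU,
      one_mul, hofReal, det_diagonal]
  have hdS' : (S + c • 1).det = ∏ i, (hS.1.eigenvalues i + c) := by
    rw [hsum, det_mul, det_mul, mul_comm, ← mul_assoc, mul_comm (star U).det, hdetU,
      one_mul, det_diagonal]
    rfl
  rw [hdS, hdS']
  exact Finset.prod_le_prod (fun i _ => hS.eigenvalues_nonneg i) (fun i _ => by linarith)

lemma det_add_vecMulVec {d : ℕ} {B : Matrix (Fin d) (Fin d) ℝ} (hB : IsUnit B.det)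
    (v : Fin d → ℝ) :
    (B + vecMulVec v v).det = B.det * (1 + v ⬝ᵥ B⁻¹ *ᵥ v) := by
  rw [vecMulVec_eq Unit, Matrix.det_add_replicateCol_mul_replicateRow hB]
  congr 1
  rw [det_unique, Matrix.add_apply, Matrix.one_apply_eq, ← Matrix.replicateRow_vecMul,
    Matrix.replicateRow_mul_replicateCol_apply, ← Matrix.dotProduct_mulVec]

lemma designV_succ {d : ℕ} (t : ℕ) (ht : 1 ≤ t) (γ lam : ℝ) (x : ℕ → Fin d → ℝ) :
    designV (t + 1) γ lam x
      = (γ • designV t γ lam x + vecMulVec (x t) (x t)) + ((1 - γ) * lam) • 1 := by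
  obtain ⟨u, rfl⟩ := Nat.exists_eq_add_of_le' ht
  simp only [designV, Nat.add_sub_cancel]
  rw [Finset.sum_Icc_succ_top (by omega : 1 ≤ u + 1)]
  have hsum : ∑ s ∈ Finset.Icc 1 u, (γ ^ (u + 1 - s)) • vecMulVec (x s) (x s)
      = γ • ∑ s ∈ Finset.Icc 1 u, (γ ^ (u - s)) • vecMulVec (x s) (x s) := by
    rw [Finset.smul_sum]
    refine Finset.sum_congr rfl fun s hs => ?_
    have hsu : s ≤ u := (Finset.mem_Icc.mp hs).2
    have he : u + 1 - s = (u - s) + 1 := by omega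
    rw [he, pow_succ', ← smul_smul]
  rw [Nat.sub_self, pow_zero, one_smul, hsum]
  rw [smul_add, smul_smul]
  have : ((1 - γ) * lam) • (1 : Matrix (Fin d) (Fin d) ℝ) + (γ * lam) • 1 = lam • 1 := by
    rw [← add_smul]; ring_nf
  rw [← this]
  abel

lemma det_step {d : ℕ} (t : ℕ) (ht : 1 ≤ t) {γ lam : ℝ} (hγ : γ ∈ Set.Ioo (0:ℝ) 1)
    (hlam : 0 < lam) (x : ℕ → Fin d → ℝ) :
    γ ^ d * (designV t γ lam x).det
        * (1 + γ⁻¹ * (x t ⬝ᵥ (designV t γ lam x)⁻¹ *ᵥ x t))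
      ≤ (designV (t + 1) γ lam x).det := by
  set V := designV t γ lam x with hVdef
  have hV : V.PosDef := designV_pd t hγ.1 hlam x
  have hγV : (γ • V).PosDef := pd_smul hV hγ.1
  set v := x t with hvdef
  have hinv : (γ • V)⁻¹ = γ⁻¹ • V⁻¹ := by
    haveI : Invertible γ := invertibleOfNonzero hγ.1.ne'
    rw [Matrix.inv_smul (A := V) γ hV.det_pos.ne'.isUnit, invOf_eq_inv]
  have hdetA : (γ • V + vecMulVec v v).det
      = γ ^ d * V.det * (1 + γ⁻¹ * (v ⬝ᵥ V⁻¹ *ᵥ v)) := by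
    rw [det_add_vecMulVec hγV.det_pos.ne'.isUnit v, hinv, smul_mulVec,
      dotProduct_smul, smul_eq_mul, det_smul, Fintype.card_fin]
  have hle : (γ • V + vecMulVec v v).det ≤ (designV (t + 1) γ lam x).det := by
    rw [designV_succ t ht γ lam x]
    exact det_le_det_add_smul_one (hγV.add_posSemidef (psd_vecMulVec v)).posSemidef
      (by nlinarith [hγ.2, hlam] : (0:ℝ) ≤ (1 - γ) * lam)
  calc γ ^ d * V.det * (1 + γ⁻¹ * (v ⬝ᵥ V⁻¹ *ᵥ v))
      = (γ • V + vecMulVec v v).det := hdetA.symm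
    _ ≤ _ := hle

lemma scalar_bound {w c g : ℝ} (hw : 0 ≤ w) (hwc : w ≤ c) (hg : 1 ≤ g) :
    w ≤ 2 * max 1 c * Real.log (1 + g * w) := by
  set M := max 1 c with hM
  have hM1 : (1:ℝ) ≤ M := le_max_left _ _
  have hMc : c ≤ M := le_max_right _ _
  have h2M : 0 < 2 * M := by linarith
  have hwpos : (0:ℝ) < 1 + w := by linarith
  have hlog1 : w / (1 + w) ≤ Real.log (1 + w) := by
    have := Real.log_le_sub_one_of_pos (show (0:ℝ) < 1/(1+w) by positivity)
    rw [one_div, Real.log_inv] at this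
    have heq : 1 - (1 + w)⁻¹ = w / (1 + w) := by field_simp; ring
    linarith [this, heq ▸ (by linarith [this] : 1 - (1+w)⁻¹ ≤ Real.log (1+w))]
  have hfrac : w / (2 * M) ≤ w / (1 + w) := by
    apply div_le_div_of_nonneg_left hw hwpos
    linarith
  have hmono : Real.log (1 + w) ≤ Real.log (1 + g * w) := by
    apply Real.log_le_log hwpos
    nlinarith
  have : w / (2 * M) ≤ Real.log (1 + g * w) := le_trans hfrac (le_trans hlog1 hmono)
  calc w = 2 * M * (w / (2 * M)) := by field_simp
    _ ≤ 2 * M * Real.log (1 + g * w) := mul_le_mul_of_nonneg_left this h2M.le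

lemma telescope (F : ℕ → ℝ) (T : ℕ) :
    ∑ t ∈ Finset.Icc 1 T, (F (t + 1) - F t) = F (T + 1) - F 1 := by
  have h : ∑ t ∈ Finset.Icc 1 T, (F (t + 1) - F t)
      = ∑ i ∈ Finset.range T, (F (i + 1 + 1) - F (i + 1)) := by
    rw [← Finset.Ico_add_one_right_eq_Icc, Finset.sum_Ico_eq_sum_range]
    refine Finset.sum_congr (by norm_num) fun i _ => by rw [Nat.add_comm 1 i]
  rw [h, Finset.sum_range_sub (fun i => F (i + 1))]

lemma designV_one_det {d : ℕ} (γ lam : ℝ) (x : ℕ → Fin d → ℝ) :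
    (designV 1 γ lam x).det = lam ^ d := by
  unfold designV
  rw [show (1:ℕ) - 1 = 0 from rfl, Finset.Icc_eq_empty (by omega), Finset.sum_empty, zero_add,
    det_smul, det_one, Fintype.card_fin, mul_one]

/-- Weighted elliptical potential lemma. -/
theorem stmt_9 {d T : ℕ} (hd : 1 ≤ d) (hT : 1 ≤ T)
    (L lam γ : ℝ) (hL : 0 < L) (hlam : 0 < lam) (hγ : γ ∈ Set.Ioo (0 : ℝ) 1)
    (x : ℕ → Fin d → ℝ) (hx : ∀ s ∈ Finset.Icc 1 T, _root_.enorm (x s) ≤ L) :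
    ∑ t ∈ Finset.Icc 1 T, (mnorm (designV t γ lam x)⁻¹ (x t)) ^ 2
      ≤ 2 * max 1 (L ^ 2 / lam)
        * ((d : ℝ) * T * Real.log (1 / γ)
          + Real.log ((designV (T + 1) γ lam x).det / lam ^ d)) := by
  obtain ⟨hγ0, hγ1⟩ := hγ
  set w : ℕ → ℝ := fun t => x t ⬝ᵥ (designV t γ lam x)⁻¹ *ᵥ x t with hwdef
  set F : ℕ → ℝ := fun t => Real.log ((designV t γ lam x).det) with hFdef
  have hVpd : ∀ t, (designV t γ lam x).PosDef := fun t => designV_pd t hγ0 hlam x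
  have hD : ∀ t, 0 < (designV t γ lam x).det := fun t => (hVpd t).det_pos
  have hw0 : ∀ t, 0 ≤ w t := by
    intro t
    have := (hVpd t).inv.posSemidef.dotProduct_mulVec_nonneg (x t)
    rwa [star_trivial] at this
  have hginv : (1:ℝ) ≤ γ⁻¹ := one_le_inv_iff₀.mpr ⟨hγ0, hγ1.le⟩
  have hmn : ∀ t, (mnorm (designV t γ lam x)⁻¹ (x t)) ^ 2 = w t := fun t =>
    Real.sq_sqrt (hw0 t)
  have hwc : ∀ t ∈ Finset.Icc 1 T, w t ≤ L ^ 2 / lam := by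
    intro t htmem
    have h1 : w t ≤ (x t ⬝ᵥ x t) / lam :=
      quad_inv_le (hVpd t) hlam (designV_lower t hγ0 x) (x t)
    have h2 : x t ⬝ᵥ x t ≤ L ^ 2 := by
      have he : _root_.enorm (x t) ^ 2 = x t ⬝ᵥ x t := Real.sq_sqrt (dotProduct_self_nn _)
      rw [← he]
      exact pow_le_pow_left₀ (Real.sqrt_nonneg _) (hx t htmem) 2
    calc w t ≤ (x t ⬝ᵥ x t) / lam := h1
      _ ≤ L ^ 2 / lam := by gcongr
  have hstep : ∀ t ∈ Finset.Icc 1 T, Real.log (1 + γ⁻¹ * w t)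
      ≤ (F (t + 1) - F t) + (d : ℝ) * Real.log (1 / γ) := by
    intro t htmem
    have ht1 : 1 ≤ t := (Finset.mem_Icc.mp htmem).1
    have hds := det_step t ht1 ⟨hγ0, hγ1⟩ hlam x
    have hfac : (0:ℝ) < 1 + γ⁻¹ * w t := by
      have : 0 ≤ γ⁻¹ * w t := mul_nonneg (by positivity) (hw0 t)
      linarith
    have hγd : (0:ℝ) < γ ^ d := pow_pos hγ0 d
    have hlog := Real.log_le_log (mul_pos (mul_pos hγd (hD t)) hfac) hds
    rw [Real.log_mul (mul_pos hγd (hD t)).ne' hfac.ne', Real.log_mul hγd.ne' (hD t).ne',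
      Real.log_pow] at hlog
    have hlog1γ : Real.log (1 / γ) = - Real.log γ := by rw [one_div, Real.log_inv]
    simp only [hFdef, hlog1γ]
    have : Real.log (1 + γ⁻¹ * w t)
        ≤ Real.log ((designV (t+1) γ lam x).det)
          - Real.log ((designV t γ lam x).det) - (d:ℝ) * Real.log γ := by linarith
    linarith
  have hsum_log : ∑ t ∈ Finset.Icc 1 T, Real.log (1 + γ⁻¹ * w t)
      ≤ (F (T + 1) - F 1) + (T : ℝ) * ((d : ℝ) * Real.log (1 / γ)) := by
    calc ∑ t ∈ Finset.Icc 1 T, Real.log (1 + γ⁻¹ * w t)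
        ≤ ∑ t ∈ Finset.Icc 1 T, ((F (t + 1) - F t) + (d : ℝ) * Real.log (1 / γ)) :=
          Finset.sum_le_sum hstep
      _ = (F (T + 1) - F 1) + (T : ℝ) * ((d : ℝ) * Real.log (1 / γ)) := by
          rw [Finset.sum_add_distrib, telescope F T, Finset.sum_const, Nat.card_Icc]
          simp [nsmul_eq_mul]
  have hF1 : F 1 = Real.log (lam ^ d) := by
    simp only [hFdef, designV_one_det]
  have hlogdiv : Real.log ((designV (T + 1) γ lam x).det / lam ^ d) = F (T + 1) - F 1 := by
    rw [Real.log_div (hD _).ne' (pow_pos hlam d).ne', hF1]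
  have hMnn : (0:ℝ) ≤ 2 * max 1 (L ^ 2 / lam) := by positivity
  calc ∑ t ∈ Finset.Icc 1 T, (mnorm (designV t γ lam x)⁻¹ (x t)) ^ 2
      = ∑ t ∈ Finset.Icc 1 T, w t := Finset.sum_congr rfl fun t _ => hmn t
    _ ≤ ∑ t ∈ Finset.Icc 1 T, 2 * max 1 (L ^ 2 / lam) * Real.log (1 + γ⁻¹ * w t) :=
        Finset.sum_le_sum fun t htmem => scalar_bound (hw0 t) (hwc t htmem) hginv
    _ = 2 * max 1 (L ^ 2 / lam) * ∑ t ∈ Finset.Icc 1 T, Real.log (1 + γ⁻¹ * w t) := by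
        rw [Finset.mul_sum]
    _ ≤ 2 * max 1 (L ^ 2 / lam)
        * ((F (T + 1) - F 1) + (T : ℝ) * ((d : ℝ) * Real.log (1 / γ))) :=
        mul_le_mul_of_nonneg_left hsum_log hMnn
    _ = 2 * max 1 (L ^ 2 / lam)
        * ((d : ℝ) * T * Real.log (1 / γ)
          + Real.log ((designV (T + 1) γ lam x).det / lam ^ d)) := by
        rw [hlogdiv]; ring
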